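/- Let w ≥ 1 and f(ℓ, w) = 27^{-w}(w!)^{-2} ℓ^{4^{-w}}. Then for ℓ ≥ 1, √(f(√ℓ, w−1)/3) ≥ 3w · f(ℓ, w), i.e., sqrt(27^{-(w-1)} ℓ^{4^{-(w-1)}/2} ((w−1)!)^{-2} / 3) ≥ 3·27^{-w} ℓ^{4^{-w}} (w!)^{-2} · w. -/

import Mathlib

/-- The lower-bound function `f(ℓ, w) = 27^{-w} (w!)^{-2} ℓ^{4^{-w}}`. -/
noncomputable def fLB (ℓ : ℝ) (w : ℕ) : ℝ :=
  (27 : ℝ) ^ (-(w : ℝ)) * ((Nat.factorial w : ℝ)) ^ (-(2 : ℝ)) * ℓ ^ ((4 : ℝ) ^ (-(w : ℝ)))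

/-- The key recursive inequality of the pathwidth induction: for `w ≥ 1` and `ℓ ≥ 1`,
`√(f(√ℓ, w−1)/3) ≥ 3w · f(ℓ, w)`. -/
theorem fLB_recursive_inequality (w : ℕ) (hw : 1 ≤ w) (ℓ : ℝ) (hℓ : 1 ≤ ℓ) :
    3 * (w : ℝ) * fLB ℓ w ≤ Real.sqrt (fLB (Real.sqrt ℓ) (w - 1) / 3) := by
  have hℓ0 : (0:ℝ) < ℓ := by linarith
  have hW1 : (1:ℝ) ≤ (w:ℝ) := by exact_mod_cast hw
  have hcast : ((w - 1 : ℕ) : ℝ) = (w:ℝ) - 1 := by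
    rw [Nat.cast_sub hw]; norm_num
  set W : ℝ := (w:ℝ) with hWdef
  set F : ℝ := ((w-1).factorial : ℝ) with hFdef
  have hF1 : (1:ℝ) ≤ F := by
    exact_mod_cast Nat.one_le_cast.mpr (Nat.factorial_pos (w-1))
  have hF0 : (0:ℝ) < F := by linarith
  have hfact : ((w.factorial : ℝ)) = W * F := by
    rw [hWdef, hFdef, ← Nat.cast_mul, Nat.mul_factorial_pred (by omega)]
  set e : ℝ := (4:ℝ) ^ (-W) with hedef
  have he0 : (0:ℝ) < e := Real.rpow_pos_of_pos (by norm_num) _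
  set B : ℝ := (27:ℝ) ^ (-W/2) with hBdef
  have hB0 : (0:ℝ) < B := Real.rpow_pos_of_pos (by norm_num) _
  have hB1 : B ≤ 1 := Real.rpow_le_one_of_one_le_of_nonpos (by norm_num) (by
    rw [neg_div]; simp; positivity)
  have hB : (27:ℝ) ^ (-W) = B * B := by
    rw [hBdef, ← Real.rpow_add (by norm_num : (0:ℝ) < 27)]; ring_nf
  have hℓe0 : (0:ℝ) < ℓ ^ e := Real.rpow_pos_of_pos hℓ0 _
  have hℓe1 : (1:ℝ) ≤ ℓ ^ e := Real.one_le_rpow hℓ (le_of_lt he0)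
  have hpow2 : ∀ x : ℝ, 0 < x → x ^ (-(2:ℝ)) = x⁻¹ * x⁻¹ := by
    intro x hx
    rw [Real.rpow_neg hx.le, show (2:ℝ) = 1 + 1 by norm_num, Real.rpow_add hx,
      Real.rpow_one, mul_inv]
  -- exponent identity on sqrt side
  have hsq : (Real.sqrt ℓ) ^ ((4:ℝ) ^ (-((w:ℝ) - 1))) = ℓ ^ e * ℓ ^ e := by
    rw [Real.sqrt_eq_rpow, ← Real.rpow_mul hℓ0.le, ← Real.rpow_add hℓ0]
    congr 1
    rw [hedef, neg_sub, show (1:ℝ) - W = 1 + (-W) by ring,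
      Real.rpow_add (by norm_num : (0:ℝ) < 4), Real.rpow_one]
    ring
  have h27 : (27:ℝ) ^ (-((w:ℝ) - 1)) = 27 * (B * B) := by
    rw [← hB, neg_sub, show (1:ℝ) - W = 1 + (-W) by ring,
      Real.rpow_add (by norm_num : (0:ℝ) < 27), Real.rpow_one]
  have hinner : fLB (Real.sqrt ℓ) (w - 1) / 3 = (3 * B * F⁻¹ * ℓ ^ e)^2 := by
    rw [fLB, hcast, hsq, h27, hpow2 _ hF0]
    ring
  rw [hinner, Real.sqrt_sq (by positivity)]
  have hLHS : fLB ℓ w = B * B * ((W*F)⁻¹ * (W*F)⁻¹) * ℓ ^ e := by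
    rw [fLB, hfact, ← hedef, ← hWdef, hB, hpow2 _ (by positivity)]
  rw [hLHS]
  rw [← sub_nonneg]
  have key : 0 ≤ B * (W * F) - B * B := by
    have hWF1 : (1:ℝ) ≤ W * F := one_le_mul_of_one_le_of_one_le hW1 hF1
    nlinarith [mul_nonneg hB0.le (sub_nonneg.mpr hWF1), mul_nonneg hB0.le (sub_nonneg.mpr hB1)]
  have heq : 3 * B * F⁻¹ * ℓ ^ e - 3 * W * (B * B * ((W*F)⁻¹ * (W*F)⁻¹) * ℓ ^ e)
      = 3 * ℓ ^ e * (B * (W*F) - B*B) * (W⁻¹ * F⁻¹ * F⁻¹) := by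
    field_simp
  rw [heq]
  positivity
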